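/- There exists a unique ℂ-linear derivation D of R satisfying D(t) = u and D(u) = t + 2; moreover this derivation satisfies D(t^{-1}) = -t^{-2}u and D(t^{-1}u) = -2t^{-1}. -/

import Mathlib

noncomputable section

set_option synthInstance.maxHeartbeats 1000000
set_option maxHeartbeats 1000000

open Polynomial

/-- The polynomial `u² - (t² + 4t)` over the Laurent polynomial ring `ℂ[t,t⁻¹]`. -/
def threePoly : Polynomial (LaurentPolynomial ℂ) :=
  Polynomial.X ^ 2 - Polynomial.C (LaurentPolynomial.T 2 + 4 * LaurentPolynomial.T 1)

/-- The three-point ring `R = ℂ[t, t⁻¹, u | u² = t² + 4t]`, i.e. the quotient of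
`ℂ[t,t⁻¹][u]` by the ideal generated by `u² - t² - 4t`. -/
abbrev R3 : Type := AdjoinRoot threePoly

/-- `t^k` in `R3`, for `k : ℤ`. -/
def tp (k : ℤ) : R3 := AdjoinRoot.of threePoly (LaurentPolynomial.T k)

/-- the element `t` of `R`. -/
def tR : R3 := tp 1

/-- the element `t⁻¹` of `R`. -/
def tInv : R3 := tp (-1)

/-- the element `u` of `R`. -/
def uR : R3 := AdjoinRoot.root threePoly

open LaurentPolynomial TrivSqZeroExt AdjoinRoot

lemma tp_mul (a b : ℤ) : tp a * tp b = tp (a + b) := by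
  rw [tp, tp, tp, ← map_mul, ← T_add]

lemma tp_zero : tp 0 = 1 := by rw [tp, T_zero, map_one]

lemma t_tInv : tR * tInv = 1 := by
  rw [tR, tInv, tp_mul]; norm_num [tp_zero]

lemma u_sq : uR ^ 2 = tp 2 + 4 * tp 1 := by
  have h : Polynomial.eval₂ (AdjoinRoot.of threePoly) (AdjoinRoot.root threePoly)
      (Polynomial.X ^ 2 - Polynomial.C (T 2 + 4 * T 1)) = 0 := AdjoinRoot.eval₂_root threePoly
  simp only [Polynomial.eval₂_sub, Polynomial.eval₂_pow, Polynomial.eval₂_X, Polynomial.eval₂_C, sub_eq_zero] at h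
  simpa [uR, tp, map_add, map_mul, map_ofNat] using h

lemma tR_pow (k : ℕ) : tR ^ k = tp k := by
  rw [tR, tp, tp, ← map_pow, T_pow, mul_one]

lemma tInv_pow (k : ℕ) : tInv ^ k = tp (-k) := by
  rw [tInv, tp, tp, ← map_pow, T_pow, mul_neg_one]

lemma mem_adjoin_of (a : LaurentPolynomial ℂ) :
    AdjoinRoot.of threePoly a ∈ Algebra.adjoin ℂ {tR, tInv, uR} := by
  induction a using LaurentPolynomial.induction_on' with
  | add p q hp hq => rw [map_add]; exact add_mem hp hq
  | C_mul_T n a =>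
    rw [map_mul]
    refine mul_mem ?_ ?_
    · have : (AdjoinRoot.of threePoly) (LaurentPolynomial.C a) = algebraMap ℂ R3 a := rfl
      rw [this]
      exact Subalgebra.algebraMap_mem _ a
    · rcases le_or_gt 0 n with hn | hn
      · have : AdjoinRoot.of threePoly (T n) = tR ^ n.toNat := by
          rw [tR_pow, tp, Int.toNat_of_nonneg hn]
        rw [this]
        exact pow_mem (Algebra.subset_adjoin (by simp)) _
      · have : AdjoinRoot.of threePoly (T n) = tInv ^ (-n).toNat := by
          rw [tInv_pow, tp]
          have h2 : (-(((-n).toNat : ℕ) : ℤ)) = n := by omega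
          rw [h2]
        rw [this]
        exact pow_mem (Algebra.subset_adjoin (by simp)) _

lemma adjoin_top : Algebra.adjoin ℂ {tR, tInv, uR} = ⊤ := by
  rw [eq_top_iff]
  rintro x -
  induction x using AdjoinRoot.induction_on with
  | ih p =>
    induction p using Polynomial.induction_on' with
    | add p q hp hq => rw [map_add]; exact add_mem hp hq
    | monomial n a =>
      rw [← C_mul_X_pow_eq_monomial, map_mul, map_pow, AdjoinRoot.mk_X]
      exact mul_mem (mem_adjoin_of a)
        (pow_mem (Algebra.subset_adjoin
          (show uR ∈ ({tR, tInv, uR} : Set R3) by simp)) _)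

/-- the dual numbers over `R3`. -/
abbrev B3 : Type := TrivSqZeroExt R3 R3

lemma four_eq : (4 : B3) = inl 4 := by
  ext
  · show fst (((4:ℕ) : B3)) = _ ; rw [fst_natCast]; norm_num
  · show snd (((4:ℕ) : B3)) = _ ; rw [snd_natCast]; simp

lemma mul_formula (a b c d : R3) :
    ((inl a + inr b : B3) * (inl c + inr d)) = inl (a * c) + inr (a * d + c * b) := by
  ext <;> simp [mul_comm]

lemma sq_formula (a b : R3) :
    ((inl a + inr b : B3) ^ 2) = inl (a ^ 2) + inr (2 * a * b) := by
  ext <;> · simp [pow_two, mul_comm]; try ring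

lemma smul4_formula (a b : R3) :
    (4 * (inl a + inr b : B3)) = inl (4 * a) + inr (4 * b) := by
  rw [four_eq, mul_add, inl_mul_inl, inl_mul_inr]
  simp [smul_eq_mul]

lemma isUnit_tB : IsUnit (inl tR + inr uR : B3) := by
  refine IsUnit.of_mul_eq_one (inl tInv + inr (-(tInv * tInv * uR))) ?_
  rw [mul_formula, t_tInv]
  have : tR * -(tInv * tInv * uR) + tInv * uR = 0 := by
    have h : tR * (tInv * tInv * uR) = tInv * uR := by
      rw [show tR * (tInv * tInv * uR) = (tR * tInv) * (tInv * uR) by ring, t_tInv, one_mul]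
    rw [mul_neg, h, neg_add_cancel]
  rw [this, inr_zero, add_zero, inl_one]

/-- the algebra map `ℂ[X] → B3` sending `X` to `t + εu`. -/
def gB : ℂ[X] →ₐ[ℂ] B3 := Polynomial.aeval (inl tR + inr uR)

lemma gB_units (y : Submonoid.powers (Polynomial.X : ℂ[X])) :
    IsUnit (gB.toRingHom y) := by
  obtain ⟨y, n, rfl⟩ := y
  simp only [AlgHom.toRingHom_eq_coe, RingHom.coe_coe, map_pow, gB, aeval_X]
  exact isUnit_tB.pow n

instance : IsLocalization (Submonoid.powers (Polynomial.X : ℂ[X])) (LaurentPolynomial ℂ) :=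
  LaurentPolynomial.isLocalization

/-- the ring map `ℂ[t,t⁻¹] → B3` sending `t` to `t + εu`. -/
def fB : LaurentPolynomial ℂ →+* B3 :=
  IsLocalization.lift (M := Submonoid.powers (Polynomial.X : ℂ[X])) gB_units

lemma fB_toLaurent (p : ℂ[X]) : fB (Polynomial.toLaurent p) = gB p := by
  rw [← LaurentPolynomial.algebraMap_eq_toLaurent]
  exact IsLocalization.lift_eq gB_units p

lemma fB_T1 : fB (T 1) = inl tR + inr uR := by
  rw [← Polynomial.toLaurent_X, fB_toLaurent, gB, aeval_X]

lemma hroot : threePoly.eval₂ fB (inl uR + inr (tR + 2)) = 0 := by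
  have h4 : (T 2 + 4 * T 1 : LaurentPolynomial ℂ) =
      Polynomial.toLaurent (Polynomial.X ^ 2 + 4 * Polynomial.X) := by
    simp [Polynomial.toLaurent_X_pow, Polynomial.toLaurent_X, map_ofNat]
  simp only [threePoly]
  rw [eval₂_sub, eval₂_pow, eval₂_X, Polynomial.eval₂_C,
    show fB (T 2 + 4 * T 1) = gB (Polynomial.X ^ 2 + 4 * Polynomial.X) from by
      rw [h4, fB_toLaurent]]
  have hg : gB (Polynomial.X ^ 2 + 4 * Polynomial.X) =
      (inl tR + inr uR) ^ 2 + 4 * (inl tR + inr uR) := by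
    simp [gB, map_ofNat]
  rw [hg, sq_formula, sq_formula, smul4_formula, sub_eq_zero]
  have h1 : uR ^ 2 = tR ^ 2 + 4 * tR := by
    rw [u_sq, tR, show tp 2 = tp 1 * tp 1 by rw [tp_mul]; norm_num]
    ring
  have h2 : 2 * uR * (tR + 2) = 2 * tR * uR + 4 * uR := by ring
  rw [h1, h2]
  ext <;> simp

/-- the lift `R3 → B3` of `fB` sending `u` to `u + ε(t+2)`. -/
def φB : R3 →+* B3 := AdjoinRoot.lift fB (inl uR + inr (tR + 2)) hroot

lemma φB_t : φB tR = inl tR + inr uR :=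
  (AdjoinRoot.lift_of (h := hroot)).trans fB_T1

lemma φB_u : φB uR = inl uR + inr (tR + 2) :=
  AdjoinRoot.lift_root (h := hroot)

lemma φB_algebraMap (c : ℂ) : φB (algebraMap ℂ R3 c) = algebraMap ℂ B3 c := by
  rw [AdjoinRoot.algebraMap_eq' (S := ℂ), RingHom.comp_apply, φB, AdjoinRoot.lift_of]
  have h1 : algebraMap ℂ (LaurentPolynomial ℂ) c =
      Polynomial.toLaurent (Polynomial.C c) := by
    rw [Polynomial.toLaurent_C, LaurentPolynomial.algebraMap_apply]
    simp
  rw [h1, fB_toLaurent]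
  simp [gB]

/-- `φB` as a `ℂ`-algebra hom. -/
def ΦB : R3 →ₐ[ℂ] B3 := { φB with commutes' := φB_algebraMap }

lemma ΦB_apply (x : R3) : ΦB x = φB x := rfl

lemma fst_φB (x : R3) : fst (φB x) = x := by
  have key : (TrivSqZeroExt.fstHom ℂ R3 R3).comp ΦB = AlgHom.id ℂ R3 := by
    apply AlgHom.ext_of_adjoin_eq_top adjoin_top
    rintro y (rfl | rfl | rfl)
    · show fst (φB tR) = tR
      rw [φB_t]; simp
    · show fst (φB tInv) = tInv
      have h1 : φB tR * φB tInv = 1 := by rw [← map_mul, t_tInv, map_one]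
      have h2 : fst (φB tR) * fst (φB tInv) = 1 := by
        rw [← fst_mul, h1, fst_one]
      rw [φB_t] at h2; simp at h2
      calc fst (φB tInv) = (tInv * tR) * fst (φB tInv) := by
            rw [mul_comm tInv tR, t_tInv, one_mul]
        _ = tInv * (tR * fst (φB tInv)) := by ring
        _ = tInv := by rw [h2, mul_one]
    · show fst (φB uR) = uR
      rw [φB_u]; simp
  have := congrArg (fun F => F x) key
  simpa [ΦB_apply] using this

/-- The derivation `D` on `R3` with `D t = u`, `D u = t + 2`. -/
def D3 : Derivation ℂ R3 R3 where
  toFun x := snd (φB x)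
  map_add' x y := by
    show snd (φB (x + y)) = snd (φB x) + snd (φB y)
    rw [map_add, snd_add]
  map_smul' c x := by
    show snd (φB (c • x)) = c • snd (φB x)
    rw [Algebra.smul_def, map_mul, φB_algebraMap, algebraMap_eq_inl', snd_mul,
      fst_inl, snd_inl, smul_zero, add_zero, algebraMap_smul]
  map_one_eq_zero' := by
    show snd (φB 1) = 0
    rw [map_one, snd_one]
  leibniz' a b := by
    show snd (φB (a * b)) = a • snd (φB b) + b • snd (φB a)
    rw [map_mul, snd_mul, fst_φB, fst_φB]
    simp [op_smul_eq_smul, smul_eq_mul, mul_comm]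

lemma D3_t : D3 tR = uR := by
  show snd (φB tR) = uR
  rw [φB_t]; simp

lemma D3_u : D3 uR = tR + 2 := by
  show snd (φB uR) = tR + 2
  rw [φB_u]; simp

lemma part2 (E : Derivation ℂ R3 R3) (h1 : E tR = uR) (h2 : E uR = tR + 2) :
    E tInv = -(tInv ^ 2 * uR) ∧ E (tInv * uR) = -(2 * tInv) := by
  have hE0 : E (tR * tInv) = 0 := by rw [t_tInv]; exact E.map_one_eq_zero
  rw [E.leibniz, h1, smul_eq_mul, smul_eq_mul] at hE0
  have hInv : E tInv = -(tInv ^ 2 * uR) := by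
    have h3 : tInv * (tR * E tInv + tInv * uR) = tInv * 0 := by rw [hE0]
    rw [mul_zero, mul_add, ← mul_assoc, mul_comm tInv tR, t_tInv, one_mul] at h3
    have : E tInv = -(tInv * (tInv * uR)) := by linear_combination h3
    rw [this]; ring
  refine ⟨hInv, ?_⟩
  rw [E.leibniz, h2, hInv, smul_eq_mul, smul_eq_mul]
  have htp : tInv * (tR + 2) + uR * -(tInv ^ 2 * uR) =
      tInv * tR + 2 * tInv - tInv ^ 2 * uR ^ 2 := by ring
  rw [htp, mul_comm tInv tR, t_tInv, u_sq]
  have h5 : tInv ^ 2 * (tp 2 + 4 * tp 1) = 1 + 4 * tInv := by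
    have e1 : tInv ^ 2 = tp (-2) := by rw [pow_two, tInv, tp_mul]; norm_num
    rw [e1, mul_add, tp_mul, ← mul_assoc, mul_comm (tp (-2)) 4, mul_assoc, tp_mul]
    norm_num [tp_zero, tInv]
  rw [h5]
  ring

/-- There exists a unique `ℂ`-linear derivation `D` of `R` with `D(t) = u` and `D(u) = t + 2`;
moreover this derivation satisfies `D(t⁻¹) = -t⁻²u` and `D(t⁻¹u) = -2t⁻¹`. -/
theorem stmt_15 :
    (∃! E : Derivation ℂ R3 R3, E tR = uR ∧ E uR = tR + 2) ∧
    (∀ E : Derivation ℂ R3 R3, E tR = uR → E uR = tR + 2 →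
      E tInv = -(tInv ^ 2 * uR) ∧ E (tInv * uR) = -(2 * tInv)) := by
  constructor
  · refine ⟨D3, ⟨D3_t, D3_u⟩, ?_⟩
    rintro E ⟨hE1, hE2⟩
    apply Derivation.ext_of_adjoin_eq_top _ adjoin_top
    rintro y (rfl | rfl | rfl)
    · show E tR = D3 tR
      rw [hE1, D3_t]
    · show E tInv = D3 tInv
      rw [(part2 E hE1 hE2).1, (part2 D3 D3_t D3_u).1]
    · show E uR = D3 uR
      rw [hE2, D3_u]
  · exact part2

end
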